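/- arXiv:1611.00342 — 5 statements merged into one kernel-verified Lean document; each statement's English description precedes it below -/
import Mathlib

section
/- Let x, y, z be real numbers with x > 0, y > 0, z > 0 and x + y + z < 1, and let t > 0. Then ∫₀^∞ ∫₀^∞ ∫₀^∞ [ α^{−x} β^{−y} γ^{−z} / (αβ + βγ + γα) ] · exp( − αβγ t / (αβ + βγ + γα) ) dα dβ dγ = t^{x+y+z−1} · Γ(1−x−y−z) Γ(x) Γ(y) Γ(z) / Γ(x+y+z), where Γ denotes the real Gamma function. -/
open MeasureTheory Set Real

/-- 1D change of variables for lintegrals. -/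
lemma lcov {s : Set ℝ} {f f' : ℝ → ℝ} (hs : MeasurableSet s)
    (hf' : ∀ x ∈ s, HasDerivWithinAt f (f' x) s x) (hf : InjOn f s) (g : ℝ → ENNReal) :
    ∫⁻ x in f '' s, g x = ∫⁻ x in s, ENNReal.ofReal |f' x| * g (f x) := by
  simpa only [ContinuousLinearMap.det_toSpanSingleton] using
    lintegral_image_eq_lintegral_abs_det_fderiv_mul volume hs
      (fun x hx => (hf' x hx).hasFDerivWithinAt) hf g

lemma inv_image_Ioi : (fun x : ℝ => x⁻¹) '' Ioi 0 = Ioi 0 := by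
  ext y
  constructor
  · rintro ⟨x, hx, rfl⟩; exact mem_Ioi.2 (inv_pos.2 (mem_Ioi.1 hx))
  · intro hy; exact ⟨y⁻¹, mem_Ioi.2 (inv_pos.2 (mem_Ioi.1 hy)), inv_inv y⟩

/-- Inversion substitution for lintegrals on `Ioi 0`. -/
lemma lint_inv (g : ℝ → ENNReal) :
    ∫⁻ x in Ioi (0:ℝ), g x = ∫⁻ x in Ioi (0:ℝ), ENNReal.ofReal ((x^2)⁻¹) * g x⁻¹ := by
  conv_lhs => rw [← inv_image_Ioi]
  rw [lcov measurableSet_Ioi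
    (fun x hx => (hasDerivAt_inv (ne_of_gt hx)).hasDerivWithinAt)
    (fun a _ b _ h => by rwa [inv_inj] at h) g]
  refine setLIntegral_congr_fun measurableSet_Ioi (fun x hx => ?_)
  have hx' : (0:ℝ) < x := hx
  rw [abs_neg, abs_of_pos (by positivity)]

lemma const_mul_image_Ioi {c : ℝ} (hc : 0 < c) : (fun x : ℝ => c * x) '' Ioi 0 = Ioi 0 := by
  ext y
  constructor
  · rintro ⟨x, hx, rfl⟩; exact mul_pos hc hx
  · intro hy
    have hy' : (0:ℝ) < y := hy
    exact ⟨c⁻¹ * y, mem_Ioi.2 (by positivity), by field_simp⟩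

/-- Scaling substitution for lintegrals on `Ioi 0`. -/
lemma lint_scale {c : ℝ} (hc : 0 < c) (g : ℝ → ENNReal) :
    ∫⁻ x in Ioi (0:ℝ), g x = ∫⁻ x in Ioi (0:ℝ), ENNReal.ofReal c * g (c * x) := by
  have hd : ∀ x ∈ Ioi (0:ℝ), HasDerivWithinAt (fun y => c * y) c (Ioi 0) x :=
    fun x _ => by simpa using ((hasDerivAt_id x).const_mul c).hasDerivWithinAt
  have hinj : InjOn (fun y => c * y) (Ioi (0:ℝ)) :=
    fun a _ b _ h => mul_left_cancel₀ (ne_of_gt hc) h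
  conv_lhs => rw [← const_mul_image_Ioi hc]
  rw [lcov measurableSet_Ioi hd hinj g]
  simp [abs_of_pos hc]

/-- Gamma integral as a lintegral. -/
lemma lint_gamma {a r : ℝ} (ha : 0 < a) (hr : 0 < r) :
    ∫⁻ x in Ioi (0:ℝ), ENNReal.ofReal (x ^ (a-1) * Real.exp (-(r*x)))
      = ENNReal.ofReal ((1/r) ^ a * Real.Gamma a) := by
  rw [← integral_rpow_mul_exp_neg_mul_Ioi ha hr]
  refine (ofReal_integral_eq_lintegral_ofReal ?_ ?_).symm
  · refine ((integrableOn_rpow_mul_exp_neg_mul_rpow (p := 1) (s := a-1) (b := r)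
      (by linarith) one_pos hr).congr_fun (fun x hx => ?_) measurableSet_Ioi)
    simp only [Real.rpow_one, pow_one, neg_mul]
  · filter_upwards [ae_restrict_mem measurableSet_Ioi] with x hx
    have : (0:ℝ) < x := hx
    positivity

lemma rpow_combine {β u a b : ℝ} (hβ : 0 < β) (hu : 0 < u) :
    β * (β ^ (a-1) * (β*u) ^ (b-1)) = β ^ (a+b-1) * u ^ (b-1) := by
  rw [Real.mul_rpow hβ.le hu.le,
    show β * (β^(a-1) * (β^(b-1) * u^(b-1))) = (β^(1:ℝ) * β^(a-1) * β^(b-1)) * u^(b-1) by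
      rw [Real.rpow_one]; ring,
    ← Real.rpow_add hβ, ← Real.rpow_add hβ]
  ring_nf

/-- Scaling out a multiplicative factor in a weighted lintegral. -/
lemma lint_scale_out {m p : ℝ} (hm : 0 < m) {φ : ℝ → ENNReal} :
    ∫⁻ β in Ioi (0:ℝ), ENNReal.ofReal (β ^ (p-1)) * φ (m * β)
      = ENNReal.ofReal (m ^ (-p)) * ∫⁻ σ in Ioi (0:ℝ), ENNReal.ofReal (σ ^ (p-1)) * φ σ := by
  have key : ∫⁻ σ in Ioi (0:ℝ), ENNReal.ofReal (σ ^ (p-1)) * φ σ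
      = ENNReal.ofReal (m ^ p) * ∫⁻ β in Ioi (0:ℝ), ENNReal.ofReal (β ^ (p-1)) * φ (m * β) := by
    rw [lint_scale hm (fun σ => ENNReal.ofReal (σ ^ (p-1)) * φ σ),
      ← lintegral_const_mul' _ _ ENNReal.ofReal_ne_top]
    refine setLIntegral_congr_fun measurableSet_Ioi (fun β hβ => ?_)
    have hβ' : (0:ℝ) < β := hβ
    rw [← mul_assoc, ← mul_assoc, ← ENNReal.ofReal_mul hm.le, ← ENNReal.ofReal_mul (by positivity),
      show m * (m*β) ^ (p-1) = m * ((m^(1:ℝ) * β^(p-1) * m^(p-1)) / m^(1:ℝ)) by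
        rw [Real.mul_rpow hm.le hβ'.le]; field_simp,
      Real.rpow_one]
    have hmp : m * (m * β ^ (p-1) * m ^ (p-1) / m) = m ^ p * β ^ (p-1) := by
      rw [show m * (m * β ^ (p-1) * m ^ (p-1) / m) = (m^(1:ℝ) * m^(p-1)) * β^(p-1) by
        rw [Real.rpow_one]; field_simp, ← Real.rpow_add hm]
      ring_nf
    rw [hmp]
  rw [key, ← mul_assoc, ← ENNReal.ofReal_mul (by positivity), ← Real.rpow_add hm]
  simp

lemma measurable_rpc {c : ℝ} : Measurable fun u : ℝ => u ^ c := by fun_prop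

/-- Key combination lemma, with an abstract constant. -/
lemma combo' {a b : ℝ} (ha : 0 < a) (hb : 0 < b) {φ : ℝ → ENNReal} (hφ : Measurable φ) :
    ∫⁻ β in Ioi (0:ℝ), ∫⁻ γ in Ioi (0:ℝ),
        ENNReal.ofReal (β ^ (a-1)) * ENNReal.ofReal (γ ^ (b-1)) * φ (β+γ)
      = (∫⁻ u in Ioi (0:ℝ), ENNReal.ofReal (u ^ (b-1) * (1+u) ^ (-(a+b)))) *
          ∫⁻ σ in Ioi (0:ℝ), ENNReal.ofReal (σ ^ (a+b-1)) * φ σ := by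
  have step1 : ∫⁻ β in Ioi (0:ℝ), ∫⁻ γ in Ioi (0:ℝ),
        ENNReal.ofReal (β ^ (a-1)) * ENNReal.ofReal (γ ^ (b-1)) * φ (β+γ)
      = ∫⁻ β in Ioi (0:ℝ), ∫⁻ u in Ioi (0:ℝ),
        ENNReal.ofReal (β ^ (a+b-1)) * (ENNReal.ofReal (u ^ (b-1)) * φ ((1+u) * β)) := by
    refine setLIntegral_congr_fun measurableSet_Ioi (fun β hβ => ?_)
    have hβ' : (0:ℝ) < β := hβ
    rw [lint_scale hβ' (fun γ => ENNReal.ofReal (β ^ (a-1)) * ENNReal.ofReal (γ ^ (b-1)) * φ (β+γ))]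
    refine setLIntegral_congr_fun measurableSet_Ioi (fun u hu => ?_)
    have hu' : (0:ℝ) < u := hu
    rw [show β + β*u = (1+u)*β by ring, ← mul_assoc, ← mul_assoc,
      ← ENNReal.ofReal_mul hβ'.le, ← ENNReal.ofReal_mul (by positivity),
      mul_assoc β, rpow_combine hβ' hu', ENNReal.ofReal_mul (by positivity), mul_assoc]
  rw [step1]
  have meas2 : Measurable (Function.uncurry fun β u : ℝ =>
      ENNReal.ofReal (β ^ (a+b-1)) * (ENNReal.ofReal (u ^ (b-1)) * φ ((1+u) * β))) := by
    apply Measurable.mul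
    · exact (measurable_rpc.comp measurable_fst).ennreal_ofReal
    · exact ((measurable_rpc.comp measurable_snd).ennreal_ofReal).mul
        (hφ.comp ((measurable_const.add measurable_snd).mul measurable_fst))
  rw [lintegral_lintegral_swap meas2.aemeasurable]
  have step2 : ∫⁻ u in Ioi (0:ℝ), ∫⁻ β in Ioi (0:ℝ),
        ENNReal.ofReal (β ^ (a+b-1)) * (ENNReal.ofReal (u ^ (b-1)) * φ ((1+u) * β))
      = ∫⁻ u in Ioi (0:ℝ), ENNReal.ofReal (u ^ (b-1) * (1+u) ^ (-(a+b))) *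
          ∫⁻ σ in Ioi (0:ℝ), ENNReal.ofReal (σ ^ (a+b-1)) * φ σ := by
    refine setLIntegral_congr_fun measurableSet_Ioi (fun u hu => ?_)
    have hu' : (0:ℝ) < u := hu
    have h1u : (0:ℝ) < 1 + u := by linarith
    calc ∫⁻ β in Ioi (0:ℝ),
          ENNReal.ofReal (β ^ (a+b-1)) * (ENNReal.ofReal (u ^ (b-1)) * φ ((1+u) * β))
        = ENNReal.ofReal (u ^ (b-1)) *
            ∫⁻ β in Ioi (0:ℝ), ENNReal.ofReal (β ^ (a+b-1)) * φ ((1+u) * β) := by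
          rw [← lintegral_const_mul' _ _ ENNReal.ofReal_ne_top]
          exact lintegral_congr fun β => by ring
      _ = ENNReal.ofReal (u ^ (b-1)) * (ENNReal.ofReal ((1+u) ^ (-(a+b))) *
            ∫⁻ σ in Ioi (0:ℝ), ENNReal.ofReal (σ ^ (a+b-1)) * φ σ) := by
          rw [lint_scale_out h1u]
      _ = ENNReal.ofReal (u ^ (b-1) * (1+u) ^ (-(a+b))) *
            ∫⁻ σ in Ioi (0:ℝ), ENNReal.ofReal (σ ^ (a+b-1)) * φ σ := by
          rw [← mul_assoc, ← ENNReal.ofReal_mul (by positivity)]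
  rw [step2, lintegral_mul_const]
  exact (measurable_rpc.mul (measurable_rpc.comp (measurable_const.add measurable_id))).ennreal_ofReal

lemma combo {a b : ℝ} (ha : 0 < a) (hb : 0 < b) {φ : ℝ → ENNReal} (hφ : Measurable φ) :
    ∫⁻ β in Ioi (0:ℝ), ∫⁻ γ in Ioi (0:ℝ),
        ENNReal.ofReal (β ^ (a-1)) * ENNReal.ofReal (γ ^ (b-1)) * φ (β+γ)
      = ENNReal.ofReal (Real.Gamma a * Real.Gamma b / Real.Gamma (a+b)) *
          ∫⁻ σ in Ioi (0:ℝ), ENNReal.ofReal (σ ^ (a+b-1)) * φ σ := by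
  have hmexp : Measurable fun σ : ℝ => ENNReal.ofReal (Real.exp (-σ)) := by fun_prop
  have h := combo' ha hb hmexp
  have hL : ∫⁻ β in Ioi (0:ℝ), ∫⁻ γ in Ioi (0:ℝ),
        ENNReal.ofReal (β ^ (a-1)) * ENNReal.ofReal (γ ^ (b-1)) *
          ENNReal.ofReal (Real.exp (-(β+γ)))
      = ENNReal.ofReal (Real.Gamma a * Real.Gamma b) := by
    have inner : ∀ β : ℝ, β ∈ Ioi (0:ℝ) →
        (∫⁻ γ in Ioi (0:ℝ), ENNReal.ofReal (β ^ (a-1)) * ENNReal.ofReal (γ ^ (b-1)) *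
          ENNReal.ofReal (Real.exp (-(β+γ))))
        = ENNReal.ofReal (β ^ (a-1) * Real.exp (-(1*β))) * ENNReal.ofReal (Real.Gamma b) := by
      intro β hβ
      have hβ' : (0:ℝ) < β := hβ
      have : ∀ γ : ℝ, γ ∈ Ioi (0:ℝ) →
          ENNReal.ofReal (β ^ (a-1)) * ENNReal.ofReal (γ ^ (b-1)) *
            ENNReal.ofReal (Real.exp (-(β+γ)))
          = ENNReal.ofReal (β ^ (a-1) * Real.exp (-(1*β))) *
              ENNReal.ofReal (γ ^ (b-1) * Real.exp (-(1*γ))) := by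
        intro γ hγ
        have hγ' : (0:ℝ) < γ := hγ
        rw [← ENNReal.ofReal_mul (by positivity), ← ENNReal.ofReal_mul (by positivity),
          ← ENNReal.ofReal_mul (by positivity)]
        congr 1
        rw [one_mul, one_mul, show -(β+γ) = -β + -γ by ring, Real.exp_add]
        ring
      rw [setLIntegral_congr_fun measurableSet_Ioi this,
        lintegral_const_mul' _ _ ENNReal.ofReal_ne_top, lint_gamma hb one_pos]
      simp
    rw [setLIntegral_congr_fun measurableSet_Ioi inner,
      lintegral_mul_const _ (by fun_prop), lint_gamma ha one_pos,
      ← ENNReal.ofReal_mul (by positivity)]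
    simp
  have hR : ∫⁻ σ in Ioi (0:ℝ), ENNReal.ofReal (σ ^ (a+b-1)) * ENNReal.ofReal (Real.exp (-σ))
      = ENNReal.ofReal (Real.Gamma (a+b)) := by
    have : ∀ σ : ℝ, σ ∈ Ioi (0:ℝ) →
        ENNReal.ofReal (σ ^ (a+b-1)) * ENNReal.ofReal (Real.exp (-σ))
        = ENNReal.ofReal (σ ^ (a+b-1) * Real.exp (-(1*σ))) := fun σ hσ => by
      rw [← ENNReal.ofReal_mul (Real.rpow_nonneg (le_of_lt hσ) _), one_mul]
    rw [setLIntegral_congr_fun measurableSet_Ioi this,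
      lint_gamma (by linarith) one_pos]
    simp
  rw [hL, hR] at h
  have hG : (0:ℝ) < Real.Gamma (a+b) := Real.Gamma_pos_of_pos (by linarith)
  have hC : (∫⁻ u in Ioi (0:ℝ), ENNReal.ofReal (u ^ (b-1) * (1+u) ^ (-(a+b))))
      = ENNReal.ofReal (Real.Gamma a * Real.Gamma b / Real.Gamma (a+b)) := by
    rw [ENNReal.ofReal_div_of_pos hG, h, mul_div_assoc,
      ENNReal.div_self (by simpa using hG) ENNReal.ofReal_ne_top, mul_one]
  rw [combo' ha hb hφ, hC]


lemma inv_rpow_neg {α c : ℝ} (hα : 0 < α) : α⁻¹ ^ (-c) = α ^ c := by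
  rw [Real.inv_rpow hα.le, ← Real.rpow_neg hα.le, neg_neg]

lemma invert_integrand {x y z t α β γ : ℝ} (hα : 0 < α) (hβ : 0 < β) (hγ : 0 < γ) :
    (α^2)⁻¹ * ((β^2)⁻¹ * ((γ^2)⁻¹ *
      ((α⁻¹ ^ (-x) * β⁻¹ ^ (-y) * γ⁻¹ ^ (-z) / (α⁻¹*β⁻¹ + β⁻¹*γ⁻¹ + γ⁻¹*α⁻¹)) *
        Real.exp (-(α⁻¹*β⁻¹*γ⁻¹*t) / (α⁻¹*β⁻¹ + β⁻¹*γ⁻¹ + γ⁻¹*α⁻¹)))))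
    = α ^ (x-1) * (β ^ (y-1) * γ ^ (z-1) *
        (Real.exp (-(t/(α+(β+γ)))) / (α+(β+γ)))) := by
  have hS : (0:ℝ) < α+(β+γ) := by linarith
  have hD : α⁻¹*β⁻¹ + β⁻¹*γ⁻¹ + γ⁻¹*α⁻¹ = (α+(β+γ))/(α*β*γ) := by
    field_simp; ring
  have harg : -(α⁻¹*β⁻¹*γ⁻¹*t) / ((α+(β+γ))/(α*β*γ)) = -(t/(α+(β+γ))) := by
    rw [div_div_eq_mul_div, neg_mul, neg_div, neg_inj,
      show α⁻¹ * β⁻¹ * γ⁻¹ * t * (α * β * γ) = t by field_simp]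
  rw [hD, harg, inv_rpow_neg hα, inv_rpow_neg hβ, inv_rpow_neg hγ,
    Real.rpow_sub hα, Real.rpow_sub hβ, Real.rpow_sub hγ, Real.rpow_one, Real.rpow_one, Real.rpow_one]
  field_simp

lemma invert_final {s t σ : ℝ} (hσ : 0 < σ) (hs : s < 1) :
    (σ^2)⁻¹ * (σ⁻¹ ^ (s-1) * (Real.exp (-(t/σ⁻¹)) / σ⁻¹))
    = σ ^ ((1-s)-1) * Real.exp (-(t*σ)) := by
  have h1 : σ⁻¹ ^ (s-1) = σ ^ (1-s) := by
    rw [Real.inv_rpow hσ.le, ← Real.rpow_neg hσ.le]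
    norm_num
  have h2 : t/σ⁻¹ = t*σ := by field_simp
  rw [h1, h2, Real.rpow_sub hσ, Real.rpow_one]
  field_simp
  rw [← Real.rpow_add hσ, show s + (1 - s - 1) = 0 by ring, Real.rpow_zero]


noncomputable def sunsetFi (x y z t α β γ : ℝ) : ℝ :=
  (α ^ (-x) * β ^ (-y) * γ ^ (-z) / (α*β + β*γ + γ*α)) *
    Real.exp (-(α*β*γ*t) / (α*β + β*γ + γ*α))

lemma sunset_lintegral (x y z t : ℝ) (hx : 0 < x) (hy : 0 < y) (hz : 0 < z)
    (hsum : x + y + z < 1) (ht : 0 < t) :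
    (∫⁻ α in Ioi (0:ℝ), ∫⁻ β in Ioi (0:ℝ), ∫⁻ γ in Ioi (0:ℝ),
        ENNReal.ofReal (sunsetFi x y z t α β γ))
      = ENNReal.ofReal (t ^ (x+y+z-1) *
          (Real.Gamma (1-x-y-z) * Real.Gamma x * Real.Gamma y * Real.Gamma z /
            Real.Gamma (x+y+z))) := by
  have hgm : ∀ α : ℝ, Measurable fun σ : ℝ =>
      ENNReal.ofReal (Real.exp (-(t/(α+σ))) / (α+σ)) := fun α => by fun_prop
  have step1 : (∫⁻ α in Ioi (0:ℝ), ∫⁻ β in Ioi (0:ℝ), ∫⁻ γ in Ioi (0:ℝ),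
        ENNReal.ofReal (sunsetFi x y z t α β γ))
      = ∫⁻ α in Ioi (0:ℝ), ENNReal.ofReal (α ^ (x-1)) *
          ∫⁻ β in Ioi (0:ℝ), ∫⁻ γ in Ioi (0:ℝ),
            ENNReal.ofReal (β ^ (y-1)) * ENNReal.ofReal (γ ^ (z-1)) *
              ENNReal.ofReal (Real.exp (-(t/(α+(β+γ)))) / (α+(β+γ))) := by
    rw [lint_inv (fun α => ∫⁻ β in Ioi (0:ℝ), ∫⁻ γ in Ioi (0:ℝ),
      ENNReal.ofReal (sunsetFi x y z t α β γ))]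
    refine setLIntegral_congr_fun measurableSet_Ioi (fun α hα => ?_)
    have hα' : (0:ℝ) < α := hα
    rw [lint_inv (fun β => ∫⁻ γ in Ioi (0:ℝ), ENNReal.ofReal (sunsetFi x y z t α⁻¹ β γ))]
    rw [← lintegral_const_mul' (ENNReal.ofReal ((α^2)⁻¹)) _ ENNReal.ofReal_ne_top,
        ← lintegral_const_mul' (ENNReal.ofReal (α ^ (x-1))) _ ENNReal.ofReal_ne_top]
    refine setLIntegral_congr_fun measurableSet_Ioi (fun β hβ => ?_)
    have hβ' : (0:ℝ) < β := hβ
    rw [lint_inv (fun γ => ENNReal.ofReal (sunsetFi x y z t α⁻¹ β⁻¹ γ))]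
    rw [← lintegral_const_mul' (ENNReal.ofReal ((β^2)⁻¹)) _ ENNReal.ofReal_ne_top,
        ← lintegral_const_mul' (ENNReal.ofReal ((α^2)⁻¹)) _ ENNReal.ofReal_ne_top,
        ← lintegral_const_mul' (ENNReal.ofReal (α ^ (x-1))) _ ENNReal.ofReal_ne_top]
    refine setLIntegral_congr_fun measurableSet_Ioi (fun γ hγ => ?_)
    have hγ' : (0:ℝ) < γ := hγ
    rw [← ENNReal.ofReal_mul (by positivity), ← ENNReal.ofReal_mul (by positivity),
        ← ENNReal.ofReal_mul (by positivity), ← ENNReal.ofReal_mul (by positivity),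
        ← ENNReal.ofReal_mul (by positivity), ← ENNReal.ofReal_mul (by positivity)]
    exact congrArg ENNReal.ofReal
      (by simpa only [sunsetFi] using invert_integrand (x := x) (y := y) (z := z) (t := t) hα' hβ' hγ')
  rw [step1]
  have step2 : (∫⁻ α in Ioi (0:ℝ), ENNReal.ofReal (α ^ (x-1)) *
          ∫⁻ β in Ioi (0:ℝ), ∫⁻ γ in Ioi (0:ℝ),
            ENNReal.ofReal (β ^ (y-1)) * ENNReal.ofReal (γ ^ (z-1)) *
              ENNReal.ofReal (Real.exp (-(t/(α+(β+γ)))) / (α+(β+γ))))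
      = ∫⁻ α in Ioi (0:ℝ), ENNReal.ofReal (α ^ (x-1)) *
          (ENNReal.ofReal (Real.Gamma y * Real.Gamma z / Real.Gamma (y+z)) *
            ∫⁻ σ in Ioi (0:ℝ), ENNReal.ofReal (σ ^ (y+z-1)) *
              ENNReal.ofReal (Real.exp (-(t/(α+σ))) / (α+σ))) := by
    refine setLIntegral_congr_fun measurableSet_Ioi (fun α _ => ?_)
    rw [combo hy hz (hgm α)]
  rw [step2]
  have step3 : (∫⁻ α in Ioi (0:ℝ), ENNReal.ofReal (α ^ (x-1)) *
          (ENNReal.ofReal (Real.Gamma y * Real.Gamma z / Real.Gamma (y+z)) *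
            ∫⁻ σ in Ioi (0:ℝ), ENNReal.ofReal (σ ^ (y+z-1)) *
              ENNReal.ofReal (Real.exp (-(t/(α+σ))) / (α+σ))))
      = ENNReal.ofReal (Real.Gamma y * Real.Gamma z / Real.Gamma (y+z)) *
          ∫⁻ α in Ioi (0:ℝ), ∫⁻ σ in Ioi (0:ℝ),
            ENNReal.ofReal (α ^ (x-1)) * ENNReal.ofReal (σ ^ (y+z-1)) *
              ENNReal.ofReal (Real.exp (-(t/(α+σ))) / (α+σ)) := by
    rw [← lintegral_const_mul' (ENNReal.ofReal (Real.Gamma y * Real.Gamma z / Real.Gamma (y+z)))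
      _ ENNReal.ofReal_ne_top]
    refine setLIntegral_congr_fun measurableSet_Ioi (fun α _ => ?_)
    rw [show ENNReal.ofReal (α ^ (x-1)) *
          (ENNReal.ofReal (Real.Gamma y * Real.Gamma z / Real.Gamma (y+z)) *
            ∫⁻ σ in Ioi (0:ℝ), ENNReal.ofReal (σ ^ (y+z-1)) *
              ENNReal.ofReal (Real.exp (-(t/(α+σ))) / (α+σ)))
        = ENNReal.ofReal (Real.Gamma y * Real.Gamma z / Real.Gamma (y+z)) *
          (ENNReal.ofReal (α ^ (x-1)) *
            ∫⁻ σ in Ioi (0:ℝ), ENNReal.ofReal (σ ^ (y+z-1)) *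
              ENNReal.ofReal (Real.exp (-(t/(α+σ))) / (α+σ))) by ring]
    congr 1
    rw [← lintegral_const_mul' (ENNReal.ofReal (α ^ (x-1))) _ ENNReal.ofReal_ne_top]
    exact lintegral_congr fun σ => by ring
  rw [step3]
  have step4 : (∫⁻ α in Ioi (0:ℝ), ∫⁻ σ in Ioi (0:ℝ),
        ENNReal.ofReal (α ^ (x-1)) * ENNReal.ofReal (σ ^ (y+z-1)) *
          ENNReal.ofReal (Real.exp (-(t/(α+σ))) / (α+σ)))
      = ENNReal.ofReal (Real.Gamma x * Real.Gamma (y+z) / Real.Gamma (x+(y+z))) *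
          ∫⁻ σ in Ioi (0:ℝ), ENNReal.ofReal (σ ^ (x+(y+z)-1)) *
            ENNReal.ofReal (Real.exp (-(t/σ)) / σ) :=
    combo hx (by linarith)
      (φ := fun σ => ENNReal.ofReal (Real.exp (-(t/σ)) / σ)) (by fun_prop)
  rw [step4]
  have hs1 : (0:ℝ) < 1-(x+(y+z)) := by linarith
  have hT : (∫⁻ σ in Ioi (0:ℝ), ENNReal.ofReal (σ ^ (x+(y+z)-1)) *
        ENNReal.ofReal (Real.exp (-(t/σ)) / σ))
      = ENNReal.ofReal ((1/t) ^ (1-(x+(y+z))) * Real.Gamma (1-(x+(y+z)))) := by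
    rw [lint_inv (fun σ => ENNReal.ofReal (σ ^ (x+(y+z)-1)) *
      ENNReal.ofReal (Real.exp (-(t/σ)) / σ))]
    refine (setLIntegral_congr_fun measurableSet_Ioi
      (fun σ hσ => ?_)).trans (lint_gamma hs1 ht)
    have hσ' : (0:ℝ) < σ := hσ
    rw [← ENNReal.ofReal_mul (by positivity), ← ENNReal.ofReal_mul (by positivity)]
    exact congrArg ENNReal.ofReal (invert_final hσ' (by linarith))
  rw [hT]
  have hGx : 0 < Real.Gamma x := Real.Gamma_pos_of_pos hx
  have hGy : 0 < Real.Gamma y := Real.Gamma_pos_of_pos hy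
  have hGz : 0 < Real.Gamma z := Real.Gamma_pos_of_pos hz
  have hGyz : 0 < Real.Gamma (y+z) := Real.Gamma_pos_of_pos (by linarith)
  have hGxyz : 0 < Real.Gamma (x+(y+z)) := Real.Gamma_pos_of_pos (by linarith)
  have hG1s : 0 < Real.Gamma (1-(x+(y+z))) := Real.Gamma_pos_of_pos hs1
  rw [← ENNReal.ofReal_mul (by positivity), ← ENNReal.ofReal_mul (by positivity)]
  refine congrArg ENNReal.ofReal ?_
  rw [show x+(y+z) = x+y+z from by ring] at *
  rw [show (1:ℝ)-(x+y+z) = 1-x-y-z from by ring] at *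
  rw [one_div, Real.inv_rpow ht.le, ← Real.rpow_neg ht.le,
    show -(1-x-y-z) = x+y+z-1 from by ring]
  field_simp

set_option maxHeartbeats 1000000 in
/-- The analytically regularized two-loop sunset integral in Schwinger parameters:
for regulators `x, y, z > 0` with `x + y + z < 1` and external invariant `t > 0`,
`∫₀^∞∫₀^∞∫₀^∞ α^{−x}β^{−y}γ^{−z}/(αβ+βγ+γα) · exp(−αβγ t/(αβ+βγ+γα)) dα dβ dγ
  = t^{x+y+z−1} Γ(1−x−y−z)Γ(x)Γ(y)Γ(z)/Γ(x+y+z)`. -/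
theorem sunset_schwinger_integral
    (x y z t : ℝ) (hx : 0 < x) (hy : 0 < y) (hz : 0 < z)
    (hsum : x + y + z < 1) (ht : 0 < t) :
    (∫ α in Ioi (0:ℝ), ∫ β in Ioi (0:ℝ), ∫ γ in Ioi (0:ℝ),
        (α ^ (-x) * β ^ (-y) * γ ^ (-z) / (α*β + β*γ + γ*α)) *
          Real.exp (-(α*β*γ*t) / (α*β + β*γ + γ*α)))
      = t ^ (x + y + z - 1) *
          (Real.Gamma (1 - x - y - z) * Real.Gamma x * Real.Gamma y * Real.Gamma z /
            Real.Gamma (x + y + z)) := by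
  have hGx : 0 < Real.Gamma x := Real.Gamma_pos_of_pos hx
  have hGy : 0 < Real.Gamma y := Real.Gamma_pos_of_pos hy
  have hGz : 0 < Real.Gamma z := Real.Gamma_pos_of_pos hz
  have hGs : 0 < Real.Gamma (x+y+z) := Real.Gamma_pos_of_pos (by linarith)
  have hG1 : 0 < Real.Gamma (1-x-y-z) := Real.Gamma_pos_of_pos (by linarith)
  have hR : 0 ≤ t ^ (x+y+z-1) *
      (Real.Gamma (1-x-y-z) * Real.Gamma x * Real.Gamma y * Real.Gamma z /
        Real.Gamma (x+y+z)) := by positivity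
  show (∫ α in Ioi (0:ℝ), ∫ β in Ioi (0:ℝ), ∫ γ in Ioi (0:ℝ), sunsetFi x y z t α β γ) = _
  have hnn : ∀ α β γ : ℝ, 0 < α → 0 < β → 0 < γ → 0 ≤ sunsetFi x y z t α β γ := by
    intro α β γ hα hβ hγ
    simp only [sunsetFi]
    positivity
  have hmeasF : ∀ α β : ℝ, Measurable fun γ => sunsetFi x y z t α β γ := by
    intro α β; simp only [sunsetFi]; fun_prop
  have hmeas2 : Measurable fun p : ℝ × ℝ =>
      ∫⁻ γ in Ioi (0:ℝ), ENNReal.ofReal (sunsetFi x y z t p.1 p.2 γ) := by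
    refine Measurable.lintegral_prod_right' (f := fun q : (ℝ × ℝ) × ℝ =>
      ENNReal.ofReal (sunsetFi x y z t q.1.1 q.1.2 q.2)) ?_
    simp only [sunsetFi]; fun_prop
  have hmeas1 : Measurable fun α : ℝ => ∫⁻ β in Ioi (0:ℝ), ∫⁻ γ in Ioi (0:ℝ),
      ENNReal.ofReal (sunsetFi x y z t α β γ) :=
    Measurable.lintegral_prod_right' (f := fun p : ℝ × ℝ =>
      ∫⁻ γ in Ioi (0:ℝ), ENNReal.ofReal (sunsetFi x y z t p.1 p.2 γ)) hmeas2
  have hL := sunset_lintegral x y z t hx hy hz hsum ht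
  have hfin : (∫⁻ α in Ioi (0:ℝ), ∫⁻ β in Ioi (0:ℝ), ∫⁻ γ in Ioi (0:ℝ),
      ENNReal.ofReal (sunsetFi x y z t α β γ)) ≠ ⊤ := by
    rw [hL]; exact ENNReal.ofReal_ne_top
  have ae1 : ∀ᵐ α ∂(volume.restrict (Ioi (0:ℝ))),
      (∫⁻ β in Ioi (0:ℝ), ∫⁻ γ in Ioi (0:ℝ),
        ENNReal.ofReal (sunsetFi x y z t α β γ)) < ⊤ := ae_lt_top hmeas1 hfin
  have c3 : ∀ α β : ℝ, 0 < α → 0 < β →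
      (∫ γ in Ioi (0:ℝ), sunsetFi x y z t α β γ)
        = (∫⁻ γ in Ioi (0:ℝ), ENNReal.ofReal (sunsetFi x y z t α β γ)).toReal := by
    intro α β hα hβ
    refine integral_eq_lintegral_of_nonneg_ae ?_ (hmeasF α β).aestronglyMeasurable
    refine (ae_restrict_iff' measurableSet_Ioi).2 (Filter.Eventually.of_forall fun γ hγ => ?_)
    exact hnn α β γ hα hβ hγ
  have c2 : ∀ᵐ α ∂(volume.restrict (Ioi (0:ℝ))),
      (∫ β in Ioi (0:ℝ), ∫ γ in Ioi (0:ℝ), sunsetFi x y z t α β γ)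
        = (∫⁻ β in Ioi (0:ℝ), ∫⁻ γ in Ioi (0:ℝ),
            ENNReal.ofReal (sunsetFi x y z t α β γ)).toReal := by
    filter_upwards [ae1, ae_restrict_mem measurableSet_Ioi] with α hfinα hα
    have hmeasα : Measurable fun β => ∫⁻ γ in Ioi (0:ℝ),
        ENNReal.ofReal (sunsetFi x y z t α β γ) := by
      refine Measurable.lintegral_prod_right' (f := fun q : ℝ × ℝ =>
        ENNReal.ofReal (sunsetFi x y z t α q.1 q.2)) ?_
      simp only [sunsetFi]; fun_prop
    have step : (∫ β in Ioi (0:ℝ), ∫ γ in Ioi (0:ℝ), sunsetFi x y z t α β γ)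
        = ∫ β in Ioi (0:ℝ), (∫⁻ γ in Ioi (0:ℝ),
            ENNReal.ofReal (sunsetFi x y z t α β γ)).toReal :=
      setIntegral_congr_fun measurableSet_Ioi (fun β hβ => c3 α β hα hβ)
    rw [step, integral_eq_lintegral_of_nonneg_ae
      (Filter.Eventually.of_forall fun β => ENNReal.toReal_nonneg)
      hmeasα.ennreal_toReal.aestronglyMeasurable]
    congr 1
    have aeβ : ∀ᵐ β ∂(volume.restrict (Ioi (0:ℝ))),
        (∫⁻ γ in Ioi (0:ℝ), ENNReal.ofReal (sunsetFi x y z t α β γ)) < ⊤ :=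
      ae_lt_top hmeasα hfinα.ne
    refine lintegral_congr_ae ?_
    filter_upwards [aeβ] with β hβfin
    rw [ENNReal.ofReal_toReal hβfin.ne]
  calc (∫ α in Ioi (0:ℝ), ∫ β in Ioi (0:ℝ), ∫ γ in Ioi (0:ℝ), sunsetFi x y z t α β γ)
      = ∫ α in Ioi (0:ℝ), (∫⁻ β in Ioi (0:ℝ), ∫⁻ γ in Ioi (0:ℝ),
          ENNReal.ofReal (sunsetFi x y z t α β γ)).toReal := integral_congr_ae c2
    _ = (∫⁻ α in Ioi (0:ℝ), ENNReal.ofReal ((∫⁻ β in Ioi (0:ℝ), ∫⁻ γ in Ioi (0:ℝ),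
          ENNReal.ofReal (sunsetFi x y z t α β γ)).toReal)).toReal :=
        integral_eq_lintegral_of_nonneg_ae
          (Filter.Eventually.of_forall fun α => ENNReal.toReal_nonneg)
          hmeas1.ennreal_toReal.aestronglyMeasurable
    _ = (∫⁻ α in Ioi (0:ℝ), ∫⁻ β in Ioi (0:ℝ), ∫⁻ γ in Ioi (0:ℝ),
          ENNReal.ofReal (sunsetFi x y z t α β γ)).toReal := by
        congr 1
        refine lintegral_congr_ae ?_
        filter_upwards [ae1] with α h
        rw [ENNReal.ofReal_toReal h.ne]
    _ = _ := by rw [hL, ENNReal.toReal_ofReal hR]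
end

section
/- For all real x > 0, y > 0, z > 0, ∫₀^∞ ∫₀^1 [ α^{y+z−1} (1−α)^{x+z−1} γ^{x+y−1} / ( α(1−α) + γ )^{x+y+z} ] dα dγ = Γ(x) Γ(y) Γ(z) / Γ(x+y+z), where Γ denotes the real Gamma function. -/
open MeasureTheory Set Real

lemma beta_integrableOn (a b : ℝ) (ha : 0 < a) (hb : 0 < b) :
    IntegrableOn (fun t : ℝ => t ^ (a - 1) * (1 - t) ^ (b - 1)) (Ioo (0:ℝ) 1) := by
  have h := Complex.betaIntegral_convergent (u := (a:ℂ)) (v := (b:ℂ)) (by simpa) (by simpa)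
  rw [intervalIntegrable_iff_integrableOn_Ioo_of_le zero_le_one] at h
  have heq : ∀ t ∈ Ioo (0:ℝ) 1,
      (t:ℂ) ^ ((a:ℂ) - 1) * ((1:ℂ) - t) ^ ((b:ℂ) - 1)
        = ((t ^ (a - 1) * (1 - t) ^ (b - 1) : ℝ) : ℂ) := by
    intro t ht
    rw [show ((a:ℂ) - 1) = ((a - 1 : ℝ) : ℂ) by push_cast; ring,
        show ((b:ℂ) - 1) = ((b - 1 : ℝ) : ℂ) by push_cast; ring,
        show ((1:ℂ) - t) = ((1 - t : ℝ) : ℂ) by push_cast; ring,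
        ← Complex.ofReal_cpow ht.1.le, ← Complex.ofReal_cpow (by linarith [ht.2]),
        ← Complex.ofReal_mul]
  have h2 : IntegrableOn (fun t : ℝ => ((t ^ (a - 1) * (1 - t) ^ (b - 1) : ℝ) : ℂ))
      (Ioo (0:ℝ) 1) := h.congr_fun heq measurableSet_Ioo
  simpa [IntegrableOn] using h2.re

lemma real_beta (a b : ℝ) (ha : 0 < a) (hb : 0 < b) :
    ∫ t in (0:ℝ)..1, t ^ (a - 1) * (1 - t) ^ (b - 1)
      = Real.Gamma a * Real.Gamma b / Real.Gamma (a + b) := by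
  have h := Complex.Gamma_mul_Gamma_eq_betaIntegral (s := (a:ℂ)) (t := (b:ℂ))
    (by simpa) (by simpa)
  rw [Complex.betaIntegral] at h
  have heq : ∀ t ∈ Set.uIoc (0:ℝ) 1,
      (t:ℂ) ^ ((a:ℂ) - 1) * ((1:ℂ) - t) ^ ((b:ℂ) - 1)
        = ((t ^ (a - 1) * (1 - t) ^ (b - 1) : ℝ) : ℂ) := by
    intro t ht
    rw [Set.uIoc_of_le zero_le_one] at ht
    rw [show ((a:ℂ) - 1) = ((a - 1 : ℝ) : ℂ) by push_cast; ring,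
        show ((b:ℂ) - 1) = ((b - 1 : ℝ) : ℂ) by push_cast; ring,
        show ((1:ℂ) - t) = ((1 - t : ℝ) : ℂ) by push_cast; ring,
        ← Complex.ofReal_cpow ht.1.le, ← Complex.ofReal_cpow (by linarith [ht.2]),
        ← Complex.ofReal_mul]
  rw [intervalIntegral.integral_congr_ae (Filter.Eventually.of_forall heq),
      intervalIntegral.integral_ofReal] at h
  rw [show ((a:ℂ) + b) = ((a + b : ℝ):ℂ) by push_cast; ring] at h
  simp only [Complex.Gamma_ofReal, ← Complex.ofReal_mul, Complex.ofReal_inj] at h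
  rw [eq_div_iff ((Real.Gamma_pos_of_pos (by linarith)).ne'), mul_comm, ← h]

section CoV
variable (s t : ℝ)

lemma cov_deriv : ∀ w ∈ Ioo (0:ℝ) 1,
    HasDerivWithinAt (fun w : ℝ => w / (1 - w)) (((1 - w) ^ 2)⁻¹) (Ioo (0:ℝ) 1) w := by
  intro w hw
  have h1 : (1:ℝ) - w ≠ 0 := by rw [Set.mem_Ioo] at hw; intro h; linarith [hw.2]
  have := (hasDerivAt_id w).div ((hasDerivAt_id w).const_sub 1) h1
  simp only [id] at this
  rw [show (id / fun x : ℝ => 1 - x) = fun w : ℝ => w / (1 - w) from rfl] at this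
  refine this.hasDerivWithinAt.congr_deriv ?_
  ring

lemma cov_inj : InjOn (fun w : ℝ => w / (1 - w)) (Ioo (0:ℝ) 1) := by
  intro a ha b hb hab
  simp only [Set.mem_Ioo] at ha hb
  have h1 : (1:ℝ) - a ≠ 0 := by intro h; linarith [ha.2]
  have h2 : (1:ℝ) - b ≠ 0 := by intro h; linarith [hb.2]
  field_simp at hab
  linarith

lemma cov_image : (fun w : ℝ => w / (1 - w)) '' Ioo (0:ℝ) 1 = Ioi (0:ℝ) := by
  ext u
  constructor
  · rintro ⟨w, hw, rfl⟩
    rw [Set.mem_Ioo] at hw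
    exact div_pos hw.1 (by linarith [hw.2])
  · intro hu
    rw [Set.mem_Ioi] at hu
    refine ⟨u / (1 + u), ⟨div_pos hu (by linarith), ?_⟩, ?_⟩
    · rw [div_lt_one (by linarith)]; linarith
    · have h1 : (1:ℝ) + u ≠ 0 := by positivity
      field_simp
      ring

lemma cov_pointwise (hw : ∀ w, w ∈ Ioo (0:ℝ) 1 → True) : True := trivial

lemma cov_integrand (w : ℝ) (hw : w ∈ Ioo (0:ℝ) 1) :
    |((1 - w) ^ 2)⁻¹| • ((w / (1 - w)) ^ (s - 1) * (1 + w / (1 - w)) ^ (-(s + t)))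
      = w ^ (s - 1) * (1 - w) ^ (t - 1) := by
  rw [Set.mem_Ioo] at hw
  have h0 : (0:ℝ) < w := hw.1
  have h1 : (0:ℝ) < 1 - w := by linarith [hw.2]
  have e1 : (1:ℝ) + w / (1 - w) = (1 - w)⁻¹ := by field_simp; ring
  have A : ((1-w)⁻¹) ^ (-(s+t)) = (1-w)^(s+t) := by
    rw [← Real.rpow_neg_one (1-w), ← Real.rpow_mul h1.le]; norm_num
  have B : (w/(1-w))^(s-1) = w^(s-1) * (1-w)^(-(s-1)) := by
    rw [Real.div_rpow h0.le h1.le, div_eq_mul_inv, ← Real.rpow_neg h1.le]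
  have D : |((1-w)^2)⁻¹| = (1-w)^(-2:ℝ) := by
    rw [abs_of_nonneg (by positivity), ← Real.rpow_natCast (1-w) 2, ← Real.rpow_neg h1.le]
    norm_num
  rw [e1, A, B, D, smul_eq_mul,
      show (1-w)^(-2:ℝ) * (w^(s-1) * (1-w)^(-(s-1)) * (1-w)^(s+t))
        = w^(s-1) * ((1-w)^(-2:ℝ) * ((1-w)^(-(s-1)) * (1-w)^(s+t))) from by ring,
      ← Real.rpow_add h1, ← Real.rpow_add h1,
      show (-2 + (-(s-1) + (s+t))) = t - 1 from by ring]

lemma beta_Ioi (hs : 0 < s) (ht : 0 < t) :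
    ∫ u in Ioi (0:ℝ), u ^ (s - 1) * (1 + u) ^ (-(s + t))
      = Real.Gamma s * Real.Gamma t / Real.Gamma (s + t) := by
  rw [← cov_image, integral_image_eq_integral_abs_deriv_smul measurableSet_Ioo cov_deriv cov_inj]
  rw [setIntegral_congr_fun measurableSet_Ioo (fun w hw => cov_integrand s t w hw)]
  rw [← integral_Ioc_eq_integral_Ioo, ← intervalIntegral.integral_of_le zero_le_one]
  exact real_beta s t hs ht

lemma beta_Ioi_integrable (hs : 0 < s) (ht : 0 < t) :
    IntegrableOn (fun u : ℝ => u ^ (s - 1) * (1 + u) ^ (-(s + t))) (Ioi (0:ℝ)) := by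
  rw [← cov_image, integrableOn_image_iff_integrableOn_abs_deriv_smul measurableSet_Ioo
    cov_deriv cov_inj]
  exact (beta_integrableOn s t hs ht).congr_fun
    (fun w hw => (cov_integrand s t w hw).symm) measurableSet_Ioo
end CoV

lemma scaled_beta_Ioi (s t c : ℝ) (hs : 0 < s) (ht : 0 < t) (hc : 0 < c)
    (B : ℝ) (hB : ∫ u in Ioi (0:ℝ), u ^ (s - 1) * (1 + u) ^ (-(s + t)) = B) :
    ∫ γ in Ioi (0:ℝ), γ ^ (s - 1) * (c + γ) ^ (-(s + t)) = c ^ (-t) * B := by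
  have h := integral_comp_mul_left_Ioi
    (fun γ : ℝ => γ ^ (s - 1) * (c + γ) ^ (-(s + t))) 0 hc
  rw [mul_zero] at h
  have heq : ∀ u ∈ Ioi (0:ℝ),
      (c * u) ^ (s - 1) * (c + c * u) ^ (-(s + t))
        = c ^ (-t - 1) * (u ^ (s - 1) * (1 + u) ^ (-(s + t))) := by
    intro u hu
    rw [Set.mem_Ioi] at hu
    rw [show c + c * u = c * (1 + u) by ring, Real.mul_rpow hc.le hu.le,
        Real.mul_rpow hc.le (by linarith),
        show c ^ (s-1) * u ^ (s-1) * (c ^ (-(s+t)) * (1+u) ^ (-(s+t)))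
          = (c ^ (s-1) * c ^ (-(s+t))) * (u ^ (s-1) * (1+u) ^ (-(s+t))) from by ring,
        ← Real.rpow_add hc, show s - 1 + -(s + t) = -t - 1 from by ring]
  rw [setIntegral_congr_fun measurableSet_Ioi heq, integral_const_mul, hB] at h
  have hI : (∫ γ in Ioi (0:ℝ), γ ^ (s - 1) * (c + γ) ^ (-(s + t)))
      = c * (c ^ (-t - 1) * B) := by
    rw [h, smul_eq_mul, ← mul_assoc, mul_inv_cancel₀ hc.ne', one_mul]
  rw [hI, show c * (c ^ (-t-1) * B) = (c ^ (1:ℝ) * c ^ (-t-1)) * B from by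
      rw [Real.rpow_one]; ring,
    ← Real.rpow_add hc, show (1:ℝ) + (-t - 1) = -t from by ring]

lemma scaled_beta_Ioi_integrable (s t c : ℝ) (hs : 0 < s) (ht : 0 < t) (hc : 0 < c)
    (h : IntegrableOn (fun u : ℝ => u ^ (s - 1) * (1 + u) ^ (-(s + t))) (Ioi (0:ℝ))) :
    IntegrableOn (fun γ : ℝ => γ ^ (s - 1) * (c + γ) ^ (-(s + t))) (Ioi (0:ℝ)) := by
  have := (integrableOn_Ioi_comp_mul_left_iff
    (fun γ : ℝ => γ ^ (s - 1) * (c + γ) ^ (-(s + t))) 0 hc)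
  rw [mul_zero] at this
  rw [← this]
  refine IntegrableOn.congr_fun (h.const_mul (c ^ (-t - 1))) (fun u hu => ?_)
    measurableSet_Ioi
  rw [Set.mem_Ioi] at hu
  rw [eq_comm]
  beta_reduce
  rw [eq_comm]
  rw [show c + c * u = c * (1 + u) by ring, Real.mul_rpow hc.le hu.le,
      Real.mul_rpow hc.le (by linarith),
      show c ^ (s-1) * u ^ (s-1) * (c ^ (-(s+t)) * (1+u) ^ (-(s+t)))
        = (c ^ (s-1) * c ^ (-(s+t))) * (u ^ (s-1) * (1+u) ^ (-(s+t))) from by ring,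
      ← Real.rpow_add hc, show s - 1 + -(s + t) = -t - 1 from by ring]

section Main
variable (x y z : ℝ)

/-- The integrand. -/
noncomputable def cwF (γ α : ℝ) : ℝ :=
  α ^ (y + z - 1) * (1 - α) ^ (x + z - 1) * γ ^ (x + y - 1) /
    (α * (1 - α) + γ) ^ (x + y + z)

lemma cwF_meas : Measurable (fun p : ℝ × ℝ => cwF x y z p.1 p.2) := by
  unfold cwF; fun_prop

lemma cwF_nonneg {γ α : ℝ} (hγ : 0 < γ) (hα : α ∈ Ioo (0:ℝ) 1) : 0 ≤ cwF x y z γ α := by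
  rw [Set.mem_Ioo] at hα
  have h1 : (0:ℝ) < 1 - α := by linarith [hα.2]
  unfold cwF
  have hd : (0:ℝ) ≤ (α * (1 - α) + γ) ^ (x + y + z) :=
    Real.rpow_nonneg (by nlinarith [hα.1]) _
  refine div_nonneg ?_ hd
  have := hα.1
  positivity

variable (hx : 0 < x) (hy : 0 < y) (hz : 0 < z)
include hx hy hz

lemma cwF_eq {γ α : ℝ} (hγ : 0 < γ) (hα : α ∈ Ioo (0:ℝ) 1) :
    cwF x y z γ α = (α ^ (y + z - 1) * (1 - α) ^ (x + z - 1)) *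
      (γ ^ ((x + y) - 1) * ((α * (1 - α)) + γ) ^ (-((x + y) + z))) := by
  rw [Set.mem_Ioo] at hα
  have h1 : (0:ℝ) < 1 - α := by linarith [hα.2]
  have hc : (0:ℝ) < α * (1 - α) + γ := by nlinarith [hα.1]
  unfold cwF
  rw [show -((x + y) + z) = -(x + y + z) by ring, Real.rpow_neg hc.le, div_eq_mul_inv]
  ring

lemma cwF_integrableOn_gamma {α : ℝ} (hα : α ∈ Ioo (0:ℝ) 1) :
    IntegrableOn (fun γ => cwF x y z γ α) (Ioi (0:ℝ)) := by
  have hα' := hα; rw [Set.mem_Ioo] at hα'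
  have hc : (0:ℝ) < α * (1 - α) := by nlinarith [hα'.1, hα'.2]
  have hbase := scaled_beta_Ioi_integrable (x + y) z (α * (1 - α))
    (by linarith) hz hc (beta_Ioi_integrable (x + y) z (by linarith) hz)
  refine IntegrableOn.congr_fun
    (hbase.const_mul (α ^ (y + z - 1) * (1 - α) ^ (x + z - 1)))
    (fun γ hγ => ?_) measurableSet_Ioi
  exact (cwF_eq x y z hx hy hz (Set.mem_Ioi.mp hγ) hα).symm

lemma cwF_integral_gamma {α : ℝ} (hα : α ∈ Ioo (0:ℝ) 1) :
    ∫ γ in Ioi (0:ℝ), cwF x y z γ α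
      = (α ^ (y - 1) * (1 - α) ^ (x - 1)) *
        (Real.Gamma (x + y) * Real.Gamma z / Real.Gamma (x + y + z)) := by
  have hα' := hα; rw [Set.mem_Ioo] at hα'
  have h1 : (0:ℝ) < 1 - α := by linarith [hα'.2]
  have hc : (0:ℝ) < α * (1 - α) := mul_pos hα'.1 h1
  rw [setIntegral_congr_fun measurableSet_Ioi
      (fun γ hγ => cwF_eq x y z hx hy hz (Set.mem_Ioi.mp hγ) hα),
    integral_const_mul,
    scaled_beta_Ioi (x + y) z (α * (1 - α)) (by linarith) hz hc _
      (beta_Ioi (x + y) z (by linarith) hz)]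
  rw [show Real.Gamma ((x + y) + z) = Real.Gamma (x + y + z) by ring_nf]
  rw [Real.mul_rpow hα'.1.le h1.le, ← mul_assoc]
  congr 1
  rw [show α ^ (y+z-1) * (1-α) ^ (x+z-1) * (α ^ (-z) * (1-α) ^ (-z))
      = (α ^ (y+z-1) * α ^ (-z)) * ((1-α) ^ (x+z-1) * (1-α) ^ (-z)) from by ring,
    ← Real.rpow_add hα'.1, ← Real.rpow_add h1,
    show y + z - 1 + -z = y - 1 from by ring, show x + z - 1 + -z = x - 1 from by ring]

lemma cwF_key :
    ∫⁻ α in Ioo (0:ℝ) 1, ∫⁻ γ in Ioi (0:ℝ), ENNReal.ofReal (cwF x y z γ α)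
      = ENNReal.ofReal
        (Real.Gamma x * Real.Gamma y * Real.Gamma z / Real.Gamma (x + y + z)) := by
  have hB1pos : (0:ℝ) < Real.Gamma (x + y) * Real.Gamma z / Real.Gamma (x + y + z) := by
    have := Real.Gamma_pos_of_pos (show (0:ℝ) < x + y by linarith)
    have := Real.Gamma_pos_of_pos hz
    have := Real.Gamma_pos_of_pos (show (0:ℝ) < x + y + z by linarith)
    positivity
  set B1 : ℝ := Real.Gamma (x + y) * Real.Gamma z / Real.Gamma (x + y + z) with hB1
  have step1 : ∫⁻ α in Ioo (0:ℝ) 1, ∫⁻ γ in Ioi (0:ℝ), ENNReal.ofReal (cwF x y z γ α)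
      = ∫⁻ α in Ioo (0:ℝ) 1,
          ENNReal.ofReal ((α ^ (y - 1) * (1 - α) ^ (x - 1)) * B1) := by
    refine lintegral_congr_ae ((ae_restrict_iff' measurableSet_Ioo).mpr
      (Filter.Eventually.of_forall fun α hα => ?_))
    have h := ofReal_integral_eq_lintegral_ofReal (cwF_integrableOn_gamma x y z hx hy hz hα)
        ((ae_restrict_iff' measurableSet_Ioi).mpr (Filter.Eventually.of_forall
          fun γ hγ => cwF_nonneg x y z (Set.mem_Ioi.mp hγ) hα))
    rw [cwF_integral_gamma x y z hx hy hz hα] at h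
    exact h.symm
  rw [step1,
    ← ofReal_integral_eq_lintegral_ofReal
      ((beta_integrableOn y x hy hx).mul_const B1)
      ((ae_restrict_iff' measurableSet_Ioo).mpr (Filter.Eventually.of_forall
        fun α hα => by
          rw [Set.mem_Ioo] at hα
          have h1 : (0:ℝ) < 1 - α := by linarith [hα.2]
          exact mul_nonneg (mul_nonneg (Real.rpow_nonneg hα.1.le _)
            (Real.rpow_nonneg h1.le _)) hB1pos.le)),
    integral_mul_const, ← integral_Ioc_eq_integral_Ioo,
    ← intervalIntegral.integral_of_le zero_le_one, real_beta y x hy hx]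
  congr 1
  rw [hB1]
  have hΓxy : Real.Gamma (y + x) ≠ 0 :=
    (Real.Gamma_pos_of_pos (by linarith)).ne'
  have hΓxyz : Real.Gamma (x + y + z) ≠ 0 :=
    (Real.Gamma_pos_of_pos (by linarith)).ne'
  rw [show x + y = y + x from by ring]
  field_simp

theorem cheng_wu_gamma_identity' :
    (∫ γ in Ioi (0:ℝ), ∫ α in (0:ℝ)..1,
        α ^ (y + z - 1) * (1 - α) ^ (x + z - 1) * γ ^ (x + y - 1) /
          (α * (1 - α) + γ) ^ (x + y + z))
      = Real.Gamma x * Real.Gamma y * Real.Gamma z / Real.Gamma (x + y + z) := by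
  have hmeas := cwF_meas x y z
  have hφmeas : Measurable (fun p : ℝ × ℝ => ENNReal.ofReal (cwF x y z p.1 p.2)) :=
    ENNReal.measurable_ofReal.comp hmeas
  have hG : Measurable fun γ => ∫⁻ α in Ioo (0:ℝ) 1, ENNReal.ofReal (cwF x y z γ α) :=
    Measurable.lintegral_prod_right hφmeas
  have hswap : ∫⁻ γ in Ioi (0:ℝ), ∫⁻ α in Ioo (0:ℝ) 1, ENNReal.ofReal (cwF x y z γ α)
      = ∫⁻ α in Ioo (0:ℝ) 1, ∫⁻ γ in Ioi (0:ℝ), ENNReal.ofReal (cwF x y z γ α) :=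
    lintegral_lintegral_swap hφmeas.aemeasurable
  have hkey := cwF_key x y z hx hy hz
  have hfin : (∫⁻ γ in Ioi (0:ℝ), ∫⁻ α in Ioo (0:ℝ) 1, ENNReal.ofReal (cwF x y z γ α)) ≠ ⊤ := by
    rw [hswap, hkey]; exact ENNReal.ofReal_ne_top
  have haefin := ae_lt_top hG hfin
  have hstep : (∫ γ in Ioi (0:ℝ), ∫ α in (0:ℝ)..1, cwF x y z γ α)
      = ∫ γ in Ioi (0:ℝ),
          (∫⁻ α in Ioo (0:ℝ) 1, ENNReal.ofReal (cwF x y z γ α)).toReal := by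
    refine setIntegral_congr_fun measurableSet_Ioi (fun γ hγ => ?_)
    rw [intervalIntegral.integral_of_le zero_le_one, integral_Ioc_eq_integral_Ioo,
      integral_eq_lintegral_of_nonneg_ae
        ((ae_restrict_iff' measurableSet_Ioo).mpr (Filter.Eventually.of_forall
          fun α hα => cwF_nonneg x y z (Set.mem_Ioi.mp hγ) hα))
        ((hmeas.comp (measurable_const.prodMk measurable_id)).aestronglyMeasurable)]
  have hstep2 : (∫ γ in Ioi (0:ℝ),
        (∫⁻ α in Ioo (0:ℝ) 1, ENNReal.ofReal (cwF x y z γ α)).toReal)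
      = (∫⁻ γ in Ioi (0:ℝ), ∫⁻ α in Ioo (0:ℝ) 1, ENNReal.ofReal (cwF x y z γ α)).toReal := by
    rw [integral_eq_lintegral_of_nonneg_ae
        (Filter.Eventually.of_forall fun γ => ENNReal.toReal_nonneg)
        hG.ennreal_toReal.aestronglyMeasurable]
    congr 1
    refine lintegral_congr_ae (haefin.mono fun γ hγ => ?_)
    exact ENNReal.ofReal_toReal hγ.ne
  have hRHSnn : (0:ℝ) ≤ Real.Gamma x * Real.Gamma y * Real.Gamma z / Real.Gamma (x + y + z) := by
    have := Real.Gamma_pos_of_pos hx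
    have := Real.Gamma_pos_of_pos hy
    have := Real.Gamma_pos_of_pos hz
    have := Real.Gamma_pos_of_pos (show (0:ℝ) < x + y + z by linarith)
    positivity
  calc (∫ γ in Ioi (0:ℝ), ∫ α in (0:ℝ)..1,
        α ^ (y + z - 1) * (1 - α) ^ (x + z - 1) * γ ^ (x + y - 1) /
          (α * (1 - α) + γ) ^ (x + y + z))
      = ∫ γ in Ioi (0:ℝ), ∫ α in (0:ℝ)..1, cwF x y z γ α := by unfold cwF; rfl
    _ = (∫⁻ γ in Ioi (0:ℝ), ∫⁻ α in Ioo (0:ℝ) 1, ENNReal.ofReal (cwF x y z γ α)).toReal := by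
        rw [hstep, hstep2]
    _ = Real.Gamma x * Real.Gamma y * Real.Gamma z / Real.Gamma (x + y + z) := by
        rw [hswap, hkey, ENNReal.toReal_ofReal hRHSnn]

end Main

/-- The Cheng–Wu / Feynman-parameter Gamma identity for the sunset diagram:
for `x, y, z > 0`,
`∫₀^∞∫₀^1 α^{y+z−1}(1−α)^{x+z−1}γ^{x+y−1}/(α(1−α)+γ)^{x+y+z} dα dγ
  = Γ(x)Γ(y)Γ(z)/Γ(x+y+z)`. -/
theorem cheng_wu_gamma_identity
    (x y z : ℝ) (hx : 0 < x) (hy : 0 < y) (hz : 0 < z) :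
    (∫ γ in Ioi (0:ℝ), ∫ α in (0:ℝ)..1,
        α ^ (y + z - 1) * (1 - α) ^ (x + z - 1) * γ ^ (x + y - 1) /
          (α * (1 - α) + γ) ^ (x + y + z))
      = Real.Gamma x * Real.Gamma y * Real.Gamma z / Real.Gamma (x + y + z) :=
  cheng_wu_gamma_identity' x y z hx hy hz
end

section
/- Let a > 0 and define H : ℝ³ → ℝ in a neighborhood of the origin by H(x,y,z) = [ Γ(1+x) Γ(1+y) Γ(1+z) / ( Γ(1−x) Γ(1−y) Γ(1−z) ) ] · a^{x+y+z}. Then the mixed third partial derivative ∂³H/∂x∂y∂z evaluated at (x,y,z) = (0,0,0) equals ( log a − 2γ_E )³, where γ_E is the Euler–Mascheroni constant. -/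
open Real

lemma gamma_quot_rpow_hasDerivAt (a : ℝ) (ha : 0 < a) :
    HasDerivAt (fun t : ℝ => Real.Gamma (1 + t) / Real.Gamma (1 - t) * a ^ t)
      (Real.log a - 2 * Real.eulerMascheroniConstant) 0 := by
  have h1 : HasDerivAt (fun t : ℝ => Real.Gamma (1 + t))
      (-Real.eulerMascheroniConstant) 0 := by
    have h : HasDerivAt Real.Gamma (-Real.eulerMascheroniConstant) (1 + id (0:ℝ)) := by
      simpa using Real.hasDerivAt_Gamma_one
    have := h.comp 0 ((hasDerivAt_id (0:ℝ)).const_add 1)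
    simpa [Function.comp_def] using this
  have h2 : HasDerivAt (fun t : ℝ => Real.Gamma (1 - t))
      (Real.eulerMascheroniConstant) 0 := by
    have h : HasDerivAt Real.Gamma (-Real.eulerMascheroniConstant) (1 - id (0:ℝ)) := by
      simpa using Real.hasDerivAt_Gamma_one
    have := h.comp 0 ((hasDerivAt_id (0:ℝ)).const_sub 1)
    simpa [Function.comp_def] using this
  have h3 : HasDerivAt (fun t : ℝ => Real.Gamma (1 + t) / Real.Gamma (1 - t))
      (-2 * Real.eulerMascheroniConstant) 0 := by
    have := h1.fun_div h2 (by simp [Real.Gamma_one])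
    simp only [add_zero, sub_zero, Real.Gamma_one] at this
    exact this.congr_deriv (by ring)
  have h4 : HasDerivAt (fun t : ℝ => a ^ t) (Real.log a) 0 := by
    have := (Real.hasStrictDerivAt_const_rpow ha 0).hasDerivAt
    simpa using this
  have h5 := h3.fun_mul h4
  simp only [add_zero, sub_zero, Real.Gamma_one, Real.rpow_zero] at h5
  exact h5.congr_deriv (by ring)

/-- The analytically regularized value of the sunset worldsheet diagram: for `a > 0`,
the mixed third partial derivative at the origin of
`H(x,y,z) = Γ(1+x)Γ(1+y)Γ(1+z)/(Γ(1−x)Γ(1−y)Γ(1−z)) · a^{x+y+z}`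
equals `(log a − 2γ_E)³`. -/
theorem sunset_mixed_third_derivative (a : ℝ) (ha : 0 < a) :
    deriv (fun x : ℝ => deriv (fun y : ℝ => deriv (fun z : ℝ =>
        (Real.Gamma (1 + x) * Real.Gamma (1 + y) * Real.Gamma (1 + z) /
          (Real.Gamma (1 - x) * Real.Gamma (1 - y) * Real.Gamma (1 - z))) *
          a ^ (x + y + z)) 0) 0) 0
      = (Real.log a - 2 * Real.eulerMascheroniConstant) ^ 3 := by
  set c := Real.log a - 2 * Real.eulerMascheroniConstant with hc
  have key := gamma_quot_rpow_hasDerivAt a ha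
  have hinner : ∀ x y : ℝ, deriv (fun z : ℝ =>
      (Real.Gamma (1 + x) * Real.Gamma (1 + y) * Real.Gamma (1 + z) /
        (Real.Gamma (1 - x) * Real.Gamma (1 - y) * Real.Gamma (1 - z))) *
        a ^ (x + y + z)) 0
      = (Real.Gamma (1 + x) * Real.Gamma (1 + y) /
          (Real.Gamma (1 - x) * Real.Gamma (1 - y)) * a ^ (x + y)) * c := by
    intro x y
    have heq : (fun z : ℝ =>
        (Real.Gamma (1 + x) * Real.Gamma (1 + y) * Real.Gamma (1 + z) /
          (Real.Gamma (1 - x) * Real.Gamma (1 - y) * Real.Gamma (1 - z))) *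
          a ^ (x + y + z))
        = fun z : ℝ => (Real.Gamma (1 + x) * Real.Gamma (1 + y) /
            (Real.Gamma (1 - x) * Real.Gamma (1 - y)) * a ^ (x + y)) *
            (Real.Gamma (1 + z) / Real.Gamma (1 - z) * a ^ z) := by
      funext z
      rw [Real.rpow_add ha]
      field_simp
    rw [heq]
    exact (key.const_mul _).deriv
  have hmid : ∀ x : ℝ, deriv (fun y : ℝ => deriv (fun z : ℝ =>
      (Real.Gamma (1 + x) * Real.Gamma (1 + y) * Real.Gamma (1 + z) /
        (Real.Gamma (1 - x) * Real.Gamma (1 - y) * Real.Gamma (1 - z))) *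
        a ^ (x + y + z)) 0) 0
      = (Real.Gamma (1 + x) / Real.Gamma (1 - x) * a ^ x) * c * c := by
    intro x
    have heq : (fun y : ℝ => deriv (fun z : ℝ =>
        (Real.Gamma (1 + x) * Real.Gamma (1 + y) * Real.Gamma (1 + z) /
          (Real.Gamma (1 - x) * Real.Gamma (1 - y) * Real.Gamma (1 - z))) *
          a ^ (x + y + z)) 0)
        = fun y : ℝ => ((Real.Gamma (1 + x) / Real.Gamma (1 - x) * a ^ x) * c) *
            (Real.Gamma (1 + y) / Real.Gamma (1 - y) * a ^ y) := by
      funext y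
      rw [hinner x y, Real.rpow_add ha]
      field_simp
    rw [heq, (key.const_mul _).deriv]
  have heq : (fun x : ℝ => deriv (fun y : ℝ => deriv (fun z : ℝ =>
      (Real.Gamma (1 + x) * Real.Gamma (1 + y) * Real.Gamma (1 + z) /
        (Real.Gamma (1 - x) * Real.Gamma (1 - y) * Real.Gamma (1 - z))) *
        a ^ (x + y + z)) 0) 0)
      = fun x : ℝ => (c * c) * (Real.Gamma (1 + x) / Real.Gamma (1 - x) * a ^ x) := by
    funext x
    rw [hmid x]
    ring
  rw [heq, (key.const_mul _).deriv]
  ring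
end

section
/- Let ω > 0, let G : (0,∞) → ℝ be continuous, and let F : (0,∞) → ℝ be differentiable with u · F'(u) = G(u) − 1 for all u > 0. Define Φ : (0,∞) × ℝ → ℝ² by Φ(u,τ) = ( u e^{F(u)} cos(ωτ), u e^{F(u)} sin(ωτ) ). Then for all (u,τ): (i) ‖∂Φ/∂u‖² = e^{2F(u)} G(u)²; (ii) ‖∂Φ/∂τ‖² = ω² u² e^{2F(u)}; (iii) the vectors ∂Φ/∂u and ∂Φ/∂τ are orthogonal; and (iv) ‖Φ(u,τ)‖² = u² e^{2F(u)}. -/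
open Real Set

lemma hasDerivAt_euclidean2 {f g : ℝ → ℝ} {f' g' : ℝ} {x : ℝ}
    (hf : HasDerivAt f f' x) (hg : HasDerivAt g g' x) :
    HasDerivAt (fun t => (WithLp.equiv 2 (Fin 2 → ℝ)).symm ![f t, g t])
      ((WithLp.equiv 2 (Fin 2 → ℝ)).symm ![f', g']) x := by
  have h : HasDerivAt (fun t => (![f t, g t] : Fin 2 → ℝ)) ![f', g'] x := by
    rw [hasDerivAt_pi]
    intro i
    fin_cases i
    · simpa using hf
    · simpa using hg
  exact ((EuclideanSpace.equiv (Fin 2) ℝ).symm.toContinuousLinearMap.hasFDerivAt).comp_hasDerivAt x h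

lemma norm_sq_euclidean2 (a b : ℝ) :
    ‖(WithLp.equiv 2 (Fin 2 → ℝ)).symm ![a, b]‖ ^ 2 = a ^ 2 + b ^ 2 := by
  rw [EuclideanSpace.norm_eq, Real.sq_sqrt (by positivity)]
  simp [Fin.sum_univ_two, sq_abs]

lemma inner_euclidean2 (a b c d : ℝ) :
    (inner ℝ ((WithLp.equiv 2 (Fin 2 → ℝ)).symm ![a, b])
       ((WithLp.equiv 2 (Fin 2 → ℝ)).symm ![c, d]) : ℝ) = a * c + b * d := by
  simp [PiLp.inner_apply, Fin.sum_univ_two, RCLike.inner_apply]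
  ring


/-- The two-dimensional Kruskal-type "unwrapping" map
`(u, τ) ↦ u e^{F(u)} (cos ωτ, sin ωτ)`. -/
noncomputable def kruskalMap (ω : ℝ) (F : ℝ → ℝ) (u τ : ℝ) : EuclideanSpace ℝ (Fin 2) :=
  (WithLp.equiv 2 (Fin 2 → ℝ)).symm
    ![u * Real.exp (F u) * Real.cos (ω * τ), u * Real.exp (F u) * Real.sin (ω * τ)]

/-- The two-dimensional Kruskal-type unwrapping of the cigar: if `G` is continuous on
`(0,∞)` and `F` satisfies the Tortoise equation `u F'(u) = G(u) − 1`, then the map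
`Φ(u,τ) = u e^{F(u)}(cos ωτ, sin ωτ)` satisfies `‖∂Φ/∂u‖² = e^{2F} G²`,
`‖∂Φ/∂τ‖² = ω² u² e^{2F}`, `∂Φ/∂u ⟂ ∂Φ/∂τ`, and `‖Φ‖² = u² e^{2F}`. -/
theorem kruskal_unwrapping_two_dim
    (ω : ℝ) (hω : 0 < ω) (G : ℝ → ℝ) (hG : ContinuousOn G (Ioi 0))
    (F : ℝ → ℝ) (hF : ∀ u ∈ Ioi (0:ℝ), HasDerivAt F ((G u - 1) / u) u) :
    ∀ u ∈ Ioi (0:ℝ), ∀ τ : ℝ,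
      ‖deriv (fun u' => kruskalMap ω F u' τ) u‖^2
          = Real.exp (2 * F u) * (G u)^2 ∧
      ‖deriv (fun τ' => kruskalMap ω F u τ') τ‖^2
          = ω^2 * u^2 * Real.exp (2 * F u) ∧
      (inner ℝ (deriv (fun u' => kruskalMap ω F u' τ) u)
             (deriv (fun τ' => kruskalMap ω F u τ') τ) : ℝ) = 0 ∧
      ‖kruskalMap ω F u τ‖^2 = u^2 * Real.exp (2 * F u) := by
  intro u hu τ
  have hu0 : (0:ℝ) < u := hu
  have hune : u ≠ 0 := ne_of_gt hu0
  set e := Real.exp (F u) with he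
  set c := Real.cos (ω * τ) with hc
  set s := Real.sin (ω * τ) with hs
  -- derivative of r(u) = u e^{F u}
  have hr : HasDerivAt (fun u' => u' * Real.exp (F u')) (e * G u) u := by
    have h2 := (hasDerivAt_id u).mul ((hF u hu).exp)
    refine h2.congr_deriv ?_
    have hdiv : u * ((G u - 1) / u) = G u - 1 := mul_div_cancel₀ _ hune
    simp only [id]
    linear_combination e * hdiv
  have hU : HasDerivAt (fun u' => kruskalMap ω F u' τ)
      ((WithLp.equiv 2 (Fin 2 → ℝ)).symm ![e * G u * c, e * G u * s]) u := by
    unfold kruskalMap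
    exact hasDerivAt_euclidean2 (hr.mul_const c) (hr.mul_const s)
  -- derivative in τ
  have hcos : HasDerivAt (fun τ' => Real.cos (ω * τ')) (-s * ω) τ := by
    refine ((Real.hasDerivAt_cos (ω * τ)).comp τ ((hasDerivAt_id τ).const_mul ω)).congr_deriv ?_
    rw [hs]
    ring
  have hsin : HasDerivAt (fun τ' => Real.sin (ω * τ')) (c * ω) τ := by
    refine ((Real.hasDerivAt_sin (ω * τ)).comp τ ((hasDerivAt_id τ).const_mul ω)).congr_deriv ?_
    rw [hc]
    ring
  have hT : HasDerivAt (fun τ' => kruskalMap ω F u τ')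
      ((WithLp.equiv 2 (Fin 2 → ℝ)).symm
        ![u * e * (-s * ω), u * e * (c * ω)]) τ := by
    unfold kruskalMap
    exact hasDerivAt_euclidean2 (hcos.const_mul (u * e)) (hsin.const_mul (u * e))
  have hpy : s ^ 2 + c ^ 2 = 1 := Real.sin_sq_add_cos_sq (ω * τ)
  have hexp : Real.exp (2 * F u) = e ^ 2 := by
    rw [two_mul, Real.exp_add]; ring
  refine ⟨?_, ?_, ?_, ?_⟩
  · rw [hU.deriv, norm_sq_euclidean2, hexp]
    nlinarith [hpy]
  · rw [hT.deriv, norm_sq_euclidean2, hexp]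
    nlinarith [hpy]
  · rw [hU.deriv, hT.deriv, inner_euclidean2]
    ring
  · unfold kruskalMap
    rw [norm_sq_euclidean2, hexp]
    nlinarith [hpy]
end

section
/- Let n ∈ ℕ, fix an index μ ∈ Fin n, and let G : ℝⁿ → Matrix (Fin n) (Fin n) ℝ be differentiable such that (i) G(p) is a diagonal matrix for every p, and (ii) the partial derivative of G in the μ-th coordinate direction vanishes identically. Define the lowered Christoffel-type array Γ_{A C B}(p) = ∂_B G_{A C}(p) + ∂_C G_{A B}(p) − ∂_A G_{C B}(p), where ∂_I denotes the partial derivative in the I-th coordinate direction. Then for all indices A, B and all p, Γ_{A μ B}(p) = − Γ_{B μ A}(p); consequently, for every symmetric matrix S ∈ Matrix (Fin n) (Fin n) ℝ, the contraction Σ_{A,B} Γ_{A μ B}(p) · S_{A B} = 0. -/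
open Real

/-- The partial derivative of `h : ℝⁿ → ℝ` at `p` in the `I`-th coordinate
direction. -/
noncomputable def partialDeriv {n : ℕ} (I : Fin n) (h : (Fin n → ℝ) → ℝ)
    (p : Fin n → ℝ) : ℝ :=
  fderiv ℝ h p (Pi.single I 1)

/-- The lowered Christoffel-type array
`Γ_{A C B}(p) = ∂_B G_{A C}(p) + ∂_C G_{A B}(p) − ∂_A G_{C B}(p)`. -/
noncomputable def lowerChristoffel {n : ℕ} (G : (Fin n → ℝ) → Matrix (Fin n) (Fin n) ℝ)
    (A C B : Fin n) (p : Fin n → ℝ) : ℝ :=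
  partialDeriv B (fun q => G q A C) p + partialDeriv C (fun q => G q A B) p -
    partialDeriv A (fun q => G q C B) p

/-- The supersymmetry argument: for a diagonal metric `G` whose partial derivative in
the `μ`-th coordinate direction vanishes identically, the lowered Christoffel array
with middle index `μ` is antisymmetric in its outer indices; consequently its
contraction with any symmetric matrix vanishes. -/
theorem christoffel_middle_flat_antisymm
    (n : ℕ) (μ : Fin n) (G : (Fin n → ℝ) → Matrix (Fin n) (Fin n) ℝ)
    (hdiff : ∀ A B : Fin n, Differentiable ℝ (fun p => G p A B))
    (hdiag : ∀ (p : Fin n → ℝ), (G p).IsDiag)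
    (hμ : ∀ (A B : Fin n) (p : Fin n → ℝ), partialDeriv μ (fun q => G q A B) p = 0) :
    (∀ (A B : Fin n) (p : Fin n → ℝ),
        lowerChristoffel G A μ B p = - lowerChristoffel G B μ A p) ∧
    (∀ (S : Matrix (Fin n) (Fin n) ℝ), S.IsSymm → ∀ p : Fin n → ℝ,
        (∑ A : Fin n, ∑ B : Fin n, lowerChristoffel G A μ B p * S A B) = 0) := by
  have hoff : ∀ (A : Fin n), A ≠ μ → ∀ (I : Fin n) (p : Fin n → ℝ),
      partialDeriv I (fun q => G q A μ) p = 0 := by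
    intro A hA I p
    have : (fun q => G q A μ) = fun _ => (0 : ℝ) := by
      funext q; exact hdiag q hA
    rw [partialDeriv, this, fderiv_fun_const]
    simp
  have hoff' : ∀ (B : Fin n), B ≠ μ → ∀ (I : Fin n) (p : Fin n → ℝ),
      partialDeriv I (fun q => G q μ B) p = 0 := by
    intro B hB I p
    have : (fun q => G q μ B) = fun _ => (0 : ℝ) := by
      funext q; exact hdiag q (Ne.symm hB)
    rw [partialDeriv, this, fderiv_fun_const]
    simp
  have key : ∀ (A B : Fin n) (p : Fin n → ℝ),
      lowerChristoffel G A μ B p =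
        (if A = μ then partialDeriv B (fun q => G q μ μ) p else 0) -
        (if B = μ then partialDeriv A (fun q => G q μ μ) p else 0) := by
    intro A B p
    unfold lowerChristoffel
    rw [hμ A B p]
    by_cases hA : A = μ <;> by_cases hB : B = μ
    · simp [hA, hB, hμ]
    · simp [hA, hB, hoff' B hB]
    · simp [hA, hB, hoff A hA]
    · simp [hA, hB, hoff A hA, hoff' B hB]
  have hanti : ∀ (A B : Fin n) (p : Fin n → ℝ),
      lowerChristoffel G A μ B p = - lowerChristoffel G B μ A p := by
    intro A B p; rw [key, key]; ring
  refine ⟨hanti, ?_⟩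
  intro S hS p
  set T := ∑ A : Fin n, ∑ B : Fin n, lowerChristoffel G A μ B p * S A B with hT
  have hTT : T = -T := by
    calc T = ∑ B : Fin n, ∑ A : Fin n, lowerChristoffel G A μ B p * S A B :=
          Finset.sum_comm
      _ = ∑ A : Fin n, ∑ B : Fin n, lowerChristoffel G B μ A p * S B A := rfl
      _ = ∑ A : Fin n, ∑ B : Fin n, -(lowerChristoffel G A μ B p * S A B) := by
          refine Finset.sum_congr rfl fun A _ => Finset.sum_congr rfl fun B _ => ?_
          rw [hanti B A p, hS.apply A B]; ring
      _ = -T := by simp [hT]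
  linarith
end
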